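/- Let n ≥ 2 and let U ⊆ P([n]) be an up-set with |U| ≤ 2^(n-1). Let C = 1 + e^{-1} and let t be an integer with t ≥ Cn/log₂ n. Then among any sets A₁, ..., A_t ∈ U there exist indices i < j with A_i ∩ A_j ≠ ∅. -/

import Mathlib

open Finset

private lemma helper_mul (d c p pj qs pv : ℕ) {pr : ℕ} (h1 : c * qs = p * pr) (h2 : pj * pr = pv) :
    d * c * (pj * qs) = d * p * pv := by
  calc d * c * (pj * qs) = d * pj * (c * qs) := by ring
    _ = d * pj * (p * pr) := by rw [h1]
    _ = d * p * (pj * pr) := by ring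
    _ = d * p * pv := by rw [h2]

lemma aux_count {α ι : Type*} [DecidableEq α] [DecidableEq ι] (A : ι → Finset α)
    (s : Finset ι) :
    ∀ V : Finset α, (∀ i ∈ s, A i ⊆ V) → ((s : Set ι).PairwiseDisjoint A) →
    ((V.powerset.filter (fun S => ∀ i ∈ s, ¬ A i ⊆ S)).card) * 2 ^ (∑ i ∈ s, (A i).card)
      = (∏ i ∈ s, (2 ^ (A i).card - 1)) * 2 ^ V.card := by
  induction s using Finset.induction with
  | empty => intro V _ _; simp [Finset.filter_true_of_mem]
  | @insert j s hj ih =>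
    intro V hsub hdisj
    have hjV : A j ⊆ V := hsub j (mem_insert_self j s)
    have hd : ∀ i ∈ s, Disjoint (A i) (A j) := fun i hi =>
      hdisj (by simp [hi]) (by simp) (by rintro rfl; exact hj hi)
    have hbij : ((V.powerset.filter (fun S => ∀ i ∈ insert j s, ¬ A i ⊆ S)).card)
        = (((A j).powerset.erase (A j)) ×ˢ
            ((V \ A j).powerset.filter (fun S => ∀ i ∈ s, ¬ A i ⊆ S))).card := by
      apply Finset.card_nbij' (fun S => (S ∩ A j, S \ A j)) (fun p => p.1 ∪ p.2)
      · intro S hS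
        simp only [Finset.mem_coe, mem_filter, mem_powerset, mem_insert, forall_eq_or_imp] at hS
        obtain ⟨hSV, hjS, hcond⟩ := hS
        simp only [Finset.mem_coe, mem_product, mem_erase, mem_powerset, mem_filter]
        refine ⟨⟨fun hEq => hjS (hEq ▸ inter_subset_left), inter_subset_right⟩,
          sdiff_subset_sdiff hSV (Finset.Subset.refl _), fun i hi hsub' =>
          hcond i hi (hsub'.trans (sdiff_subset))⟩
      · rintro ⟨T, S'⟩ hp
        simp only [Finset.mem_coe, mem_product, mem_erase, mem_powerset, mem_filter] at hp
        obtain ⟨⟨hTne, hTj⟩, hS'V, hS'cond⟩ := hp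
        simp only [Finset.mem_coe, mem_filter, mem_powerset, mem_insert, forall_eq_or_imp]
        have hS'nj : ∀ x ∈ S', x ∉ A j := fun x hx =>
          (Finset.mem_sdiff.mp (hS'V hx)).2
        refine ⟨union_subset (hTj.trans hjV) (hS'V.trans (sdiff_subset)), ?_, ?_⟩
        · intro hAj
          apply hTne
          refine Finset.Subset.antisymm hTj (fun x hx => ?_)
          rcases Finset.mem_union.mp (hAj hx) with h | h
          · exact h
          · exact absurd hx (hS'nj x h)
        · intro i hi hAi
          apply hS'cond i hi
          intro x hx
          rcases Finset.mem_union.mp (hAi hx) with h | h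
          · exact absurd (hTj h) (Finset.disjoint_left.mp (hd i hi) hx)
          · exact h
      · intro S hS
        simp only [Finset.mem_coe, mem_filter, mem_powerset] at hS
        ext x
        simp only [Finset.mem_union, Finset.mem_inter, Finset.mem_sdiff]
        tauto
      · rintro ⟨T, S'⟩ hp
        simp only [Finset.mem_coe, mem_product, mem_erase, mem_powerset, mem_filter] at hp
        obtain ⟨⟨hTne, hTj⟩, hS'V, hS'cond⟩ := hp
        have h1 : ∀ x ∈ T, x ∈ A j := fun x hx => hTj hx
        have h2 : ∀ x ∈ S', x ∉ A j := fun x hx => (Finset.mem_sdiff.mp (hS'V hx)).2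
        have e1 : (T ∪ S') ∩ A j = T := by
          ext x
          simp only [Finset.mem_inter, Finset.mem_union]
          constructor
          · rintro ⟨h | h, hxj⟩
            · exact h
            · exact absurd hxj (h2 x h)
          · intro h; exact ⟨Or.inl h, h1 x h⟩
        have e2 : (T ∪ S') \ A j = S' := by
          ext x
          simp only [Finset.mem_sdiff, Finset.mem_union]
          constructor
          · rintro ⟨h | h, hxj⟩
            · exact absurd (h1 x h) hxj
            · exact h
          · intro h; exact ⟨Or.inr h, h2 x h⟩
        simp [e1, e2]
    rw [hbij, card_product, card_erase_of_mem (mem_powerset_self (A j)), card_powerset,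
      sum_insert hj, prod_insert hj, pow_add]
    have ih' := ih (V \ A j)
      (fun i hi => Finset.subset_sdiff.mpr ⟨hsub i (mem_insert_of_mem hi), hd i hi⟩)
      (hdisj.subset (Finset.coe_subset.mpr (subset_insert j s)))
    have hpow : 2 ^ (A j).card * 2 ^ ((V \ A j).card) = 2 ^ V.card := by
      rw [← pow_add, card_sdiff_of_subset hjV, Nat.add_sub_cancel' (card_le_card hjV)]
    exact helper_mul _ _ _ _ _ _ ih' hpow

-- e * x ≤ exp x
lemma exp_mul_le (x : ℝ) : Real.exp 1 * x ≤ Real.exp x := by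
  have h := Real.add_one_le_exp (x - 1)
  have h2 : Real.exp (x - 1) * Real.exp 1 = Real.exp x := by
    rw [← Real.exp_add]; ring_nf
  nlinarith [Real.exp_pos 1, Real.exp_pos (x - 1)]

lemma key_ineq (n t : ℕ) (hn : 2 ≤ n)
    (ht : (t : ℝ) ≥ (1 + Real.exp (-1)) * n / Real.logb 2 n) :
    Real.log 2 ≤ (t : ℝ) * (2 : ℝ) ^ (-(n : ℝ) / t) := by
  have hn1 : (1 : ℝ) < n := by exact_mod_cast hn
  have hnpos : (0 : ℝ) < n := by linarith
  have hlog2 : (0 : ℝ) < Real.log 2 := Real.log_pos (by norm_num)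
  have hm : (0 : ℝ) < Real.log n := Real.log_pos hn1
  set C : ℝ := 1 + Real.exp (-1) with hC
  have hCpos : (0 : ℝ) < C := by positivity
  set L : ℝ := Real.logb 2 n with hL
  have hLdef : L = Real.log n / Real.log 2 := rfl
  have hLpos : 0 < L := by rw [hLdef]; positivity
  set t0 : ℝ := C * n / L with ht0
  have ht0pos : 0 < t0 := by positivity
  have htpos : (0 : ℝ) < t := lt_of_lt_of_le ht0pos ht
  -- monotonicity: 2^(-n/t) ≥ 2^(-n/t0)
  have hmono : (2 : ℝ) ^ (-(n : ℝ) / t0) ≤ (2 : ℝ) ^ (-(n : ℝ) / t) := by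
    apply Real.rpow_le_rpow_of_exponent_le one_le_two
    rw [neg_div, neg_div, neg_le_neg_iff]
    exact div_le_div_of_nonneg_left hnpos.le ht0pos ht
  have hstep : t0 * (2 : ℝ) ^ (-(n : ℝ) / t0) ≤ (t : ℝ) * (2 : ℝ) ^ (-(n : ℝ) / t) :=
    mul_le_mul ht hmono (Real.rpow_pos_of_pos two_pos _).le htpos.le
  refine le_trans ?_ hstep
  -- compute n / t0 = L / C
  have hnt0 : -(n : ℝ) / t0 = -(L / C) := by
    rw [ht0]; field_simp
  rw [hnt0]
  -- 2 ^ (-(L/C)) = exp (-(log n / C))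
  have h2L : (2 : ℝ) ^ (-(L / C)) = Real.exp (-(Real.log n / C)) := by
    rw [Real.rpow_def_of_pos two_pos]
    congr 1
    rw [hLdef]
    field_simp
  rw [h2L]
  -- t0 * exp(-(log n / C)) = C * log 2 / log n * exp (log n - log n / C)
  have hexp : Real.exp (Real.log n - Real.log n / C) ≥ Real.log n / C := by
    have h1 := exp_mul_le ((1 - 1 / C) * Real.log n)
    have hCe : Real.exp 1 * (1 - 1 / C) = 1 / C := by
      have h0 : Real.exp 1 * Real.exp (-1) = 1 := by
        rw [← Real.exp_add]; simp
      have hc1 : C - 1 = Real.exp (-1) := by rw [hC]; ring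
      field_simp
      linear_combination Real.exp 1 * hc1 + h0
    have h2 : Real.exp 1 * ((1 - 1 / C) * Real.log n) = Real.log n / C := by
      rw [← mul_assoc, hCe]; ring
    rw [h2] at h1
    have h3 : (1 - 1 / C) * Real.log n = Real.log n - Real.log n / C := by ring
    rw [h3] at h1
    exact h1
  have hnexp : (n : ℝ) * Real.exp (-(Real.log n / C)) = Real.exp (Real.log n - Real.log n / C) := by
    rw [Real.exp_sub, Real.exp_log hnpos, Real.exp_neg]
    field_simp
  have expand : t0 * Real.exp (-(Real.log n / C)) =
      C * Real.log 2 / Real.log n * ((n : ℝ) * Real.exp (-(Real.log n / C))) := by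
    rw [ht0, hLdef]
    field_simp
  rw [expand, hnexp]
  have : C * Real.log 2 / Real.log n * (Real.log n / C) = Real.log 2 := by
    field_simp
  calc Real.log 2 = C * Real.log 2 / Real.log n * (Real.log n / C) := this.symm
    _ ≤ C * Real.log 2 / Real.log n * Real.exp (Real.log n - Real.log n / C) := by
        apply mul_le_mul_of_nonneg_left hexp
        positivity

lemma rpow_sum_aux {ι : Type*} (s : Finset ι) (c : ι → ℝ) :
    ∏ i ∈ s, (2 : ℝ) ^ (c i) = (2 : ℝ) ^ (∑ i ∈ s, c i) := by
  simp_rw [Real.rpow_def_of_pos two_pos, ← Real.exp_sum, Finset.mul_sum]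

theorem stmt_15' (n : ℕ) (hn : 2 ≤ n) (U : Finset (Finset (Fin n)))
    (hUp : ∀ A ∈ U, ∀ B : Finset (Fin n), A ⊆ B → B ∈ U)
    (hcard : U.card ≤ 2 ^ (n - 1))
    (t : ℕ) (ht : (t : ℝ) ≥ (1 + Real.exp (-1)) * n / Real.logb 2 n)
    (A : Fin t → Finset (Fin n)) (hA : ∀ i, A i ∈ U)
    (hcount0 : ((Finset.univ.powerset.filter
        (fun S => ∀ i ∈ (Finset.univ : Finset (Fin t)), ¬ A i ⊆ S)).card)
          * 2 ^ (∑ i, (A i).card)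
        = (∏ i, (2 ^ (A i).card - 1)) * 2 ^ (Finset.univ : Finset (Fin n)).card)
    (hkey : Real.log 2 ≤ (t : ℝ) * (2 : ℝ) ^ (-(n : ℝ) / t))
    (hcon : ∀ i j : Fin t, i < j → ¬(A i ∩ A j).Nonempty)
    (hne : ∀ i, (A i).Nonempty) :
    False := by
  have hn1 : (1 : ℝ) < n := by exact_mod_cast hn
  have hLpos : 0 < Real.logb 2 (n : ℝ) := Real.logb_pos one_lt_two hn1
  have htRpos : (0 : ℝ) < t := lt_of_lt_of_le (by positivity) ht
  have htpos : 0 < t := by exact_mod_cast htRpos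
  haveI : Nonempty (Fin t) := ⟨⟨0, htpos⟩⟩
  set N := ((Finset.univ.powerset.filter
      (fun S => ∀ i ∈ (Finset.univ : Finset (Fin t)), ¬ A i ⊆ S)).card) with hN
  rw [Finset.card_univ, Fintype.card_fin] at hcount0
  -- covering
  have hcover : (Finset.univ : Finset (Fin n)).powerset ⊆
      (Finset.univ.powerset.filter
        (fun S => ∀ i ∈ (Finset.univ : Finset (Fin t)), ¬ A i ⊆ S)) ∪ U := by
    intro S hS
    by_cases hc : ∀ i ∈ (Finset.univ : Finset (Fin t)), ¬ A i ⊆ S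
    · exact Finset.mem_union_left _ (Finset.mem_filter.mpr ⟨hS, hc⟩)
    · push_neg at hc
      obtain ⟨i, _, hi⟩ := hc
      exact Finset.mem_union_right _ (hUp (A i) (hA i) S hi)
  have hcard2n : 2 ^ n ≤ N + U.card := by
    calc 2 ^ n = (Finset.univ : Finset (Fin n)).powerset.card := by
          rw [Finset.card_powerset, Finset.card_univ, Fintype.card_fin]
      _ ≤ _ := Finset.card_le_card hcover
      _ ≤ N + U.card := Finset.card_union_le _ _
  have hNge : 2 ^ (n - 1) ≤ N := by
    have h2 : 2 ^ n = 2 ^ (n - 1) * 2 := by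
      rw [← pow_succ]; congr 1; omega
    omega
  -- sum of cards bounded by n
  have hdisjU : ∀ i ∈ (Finset.univ : Finset (Fin t)), ∀ j ∈ (Finset.univ : Finset (Fin t)),
      i ≠ j → Disjoint (A i) (A j) := by
    intro i _ j _ hij
    rcases lt_or_gt_of_ne hij with h | h
    · exact Finset.disjoint_iff_inter_eq_empty.mpr
        (Finset.not_nonempty_iff_eq_empty.mp (hcon i j h))
    · exact (Finset.disjoint_iff_inter_eq_empty.mpr
        (Finset.not_nonempty_iff_eq_empty.mp (hcon j i h))).symm
  have hSa : (∑ i, (A i).card) ≤ n := by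
    rw [← Finset.card_biUnion hdisjU]
    calc ((Finset.univ : Finset (Fin t)).biUnion A).card
        ≤ (Finset.univ : Finset (Fin n)).card := Finset.card_le_card (Finset.subset_univ _)
      _ = n := by rw [Finset.card_univ, Fintype.card_fin]
  have ha1 : ∀ i : Fin t, 1 ≤ (A i).card := fun i => Finset.Nonempty.card_pos (hne i)
  -- move to the reals
  set a : Fin t → ℕ := fun i => (A i).card with haDef
  set x : Fin t → ℝ := fun i => ((2 : ℝ) ^ (a i))⁻¹ with hx
  have hxpos : ∀ i, 0 < x i := fun i => by positivity
  have hxhalf : ∀ i, x i ≤ 1 / 2 := by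
    intro i
    rw [hx]
    simp only
    rw [inv_le_comm₀ (by positivity) (by norm_num), one_div, inv_inv]
    calc (2 : ℝ) = 2 ^ 1 := (pow_one 2).symm
      _ ≤ 2 ^ (a i) := by
          apply pow_le_pow_right₀ one_le_two (ha1 i)
  -- the product lower bound
  have hprodform : ∏ i, (1 - x i) = ((∏ i, (2 ^ (a i) - 1) : ℕ) : ℝ) / 2 ^ (∑ i, a i) := by
    push_cast [Nat.cast_prod]
    rw [← Finset.prod_pow_eq_pow_sum, ← Finset.prod_div_distrib]
    apply Finset.prod_congr rfl
    intro i _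
    have h1 : (1 : ℝ) ≤ 2 ^ (a i) := one_le_pow₀ one_le_two
    have hcast : (((2 ^ (a i) - 1 : ℕ)) : ℝ) = 2 ^ (a i) - 1 := by
      have := Nat.one_le_two_pow (n := a i)
      push_cast [Nat.cast_sub this]
      ring
    rw [hcast, hx]
    simp only
    field_simp
  have hPhalf : (1 : ℝ) / 2 ≤ ∏ i, (1 - x i) := by
    rw [hprodform, le_div_iff₀ (by positivity)]
    have hrealN : 2 ^ (n - 1) * 2 ^ (∑ i, a i) ≤ (∏ i, (2 ^ (a i) - 1)) * 2 ^ n := by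
      calc 2 ^ (n - 1) * 2 ^ (∑ i, a i) ≤ N * 2 ^ (∑ i, a i) :=
            Nat.mul_le_mul_right _ hNge
        _ = (∏ i, (2 ^ (a i) - 1)) * 2 ^ n := hcount0
    have hreal : ((2 : ℝ)) ^ (n - 1) * 2 ^ (∑ i, a i) ≤ ((∏ i, (2 ^ (a i) - 1) : ℕ) : ℝ) * 2 ^ n := by
      exact_mod_cast hrealN
    have h2n : ((2 : ℝ)) ^ n = 2 ^ (n - 1) * 2 := by
      rw [← pow_succ]; congr 1; omega
    rw [h2n] at hreal
    nlinarith [hreal, pow_pos (by norm_num : (0:ℝ) < 2) (n-1)]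
  -- strict upper bound by exp
  have hlt : ∏ i, (1 - x i) < Real.exp (-(∑ i, x i)) := by
    have : Real.exp (-(∑ i, x i)) = ∏ i, Real.exp (-(x i)) := by
      rw [← Real.exp_sum]
      congr 1
      rw [← Finset.sum_neg_distrib]
    rw [this]
    apply Finset.prod_lt_prod_of_nonempty
    · intro i _
      have := hxhalf i
      linarith
    · intro i _
      have h := Real.add_one_lt_exp (x := -(x i)) (by
        have := hxpos i; intro hcontra; linarith [neg_eq_zero.mp hcontra])
      linarith
    · exact Finset.univ_nonempty
  -- lower bound on the sum via AM-GM
  have hsum : Real.log 2 ≤ ∑ i, x i := by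
    have hw : ∀ i ∈ (Finset.univ : Finset (Fin t)), (0:ℝ) ≤ 1 / t := fun i _ => by positivity
    have hw' : ∑ _i : Fin t, (1 : ℝ) / t = 1 := by
      rw [Finset.sum_const, Finset.card_univ, Fintype.card_fin, nsmul_eq_mul]
      field_simp
    have hz : ∀ i ∈ (Finset.univ : Finset (Fin t)), (0:ℝ) ≤ x i := fun i _ => (hxpos i).le
    have hamgm := Real.geom_mean_le_arith_mean_weighted Finset.univ (fun _ => 1 / t) x hw hw' hz
    have hgeom : ∏ i, (x i) ^ ((1:ℝ) / t) = (2 : ℝ) ^ (-(∑ i, (a i : ℝ)) / t) := by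
      have hxr : ∀ i, x i = (2 : ℝ) ^ (-(a i : ℝ)) := by
        intro i
        rw [hx]
        simp only
        rw [Real.rpow_neg (by norm_num), Real.rpow_natCast]
      calc ∏ i, (x i) ^ ((1:ℝ) / t)
          = ∏ i, (2 : ℝ) ^ (-(a i : ℝ) * (1 / t)) := by
            apply Finset.prod_congr rfl
            intro i _
            rw [hxr i, ← Real.rpow_mul (by norm_num : (0:ℝ) ≤ 2)]
        _ = (2 : ℝ) ^ (∑ i, -(a i : ℝ) * (1 / t)) := rpow_sum_aux _ _
        _ = (2 : ℝ) ^ (-(∑ i, (a i : ℝ)) / t) := by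
            congr 1
            rw [← Finset.sum_mul, ← Finset.sum_neg_distrib]
            ring
    have hRHS : ∑ i, (1 / t : ℝ) * x i = (∑ i, x i) / t := by
      rw [← Finset.mul_sum]; ring
    rw [hgeom, hRHS] at hamgm
    have hs : (∑ i, (a i : ℝ)) ≤ (n : ℝ) := by
      have : ((∑ i, a i : ℕ) : ℝ) ≤ (n : ℝ) := by exact_mod_cast hSa
      push_cast at this
      exact this
    have hmono2 : (2 : ℝ) ^ (-(n : ℝ) / t) ≤ (2 : ℝ) ^ (-(∑ i, (a i : ℝ)) / t) := by
      apply Real.rpow_le_rpow_of_exponent_le one_le_two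
      rw [neg_div, neg_div, neg_le_neg_iff]
      gcongr
    calc Real.log 2 ≤ (t : ℝ) * (2 : ℝ) ^ (-(n : ℝ) / t) := hkey
      _ ≤ (t : ℝ) * (2 : ℝ) ^ (-(∑ i, (a i : ℝ)) / t) :=
          mul_le_mul_of_nonneg_left hmono2 htRpos.le
      _ ≤ (t : ℝ) * ((∑ i, x i) / t) := mul_le_mul_of_nonneg_left hamgm htRpos.le
      _ = ∑ i, x i := by field_simp
  -- conclude
  have hfin : Real.exp (-(∑ i, x i)) ≤ 1 / 2 := by
    calc Real.exp (-(∑ i, x i)) ≤ Real.exp (-(Real.log 2)) :=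
          Real.exp_le_exp.mpr (by linarith)
      _ = 1 / 2 := by rw [Real.exp_neg, Real.exp_log (by norm_num)]; norm_num
  linarith

theorem stmt_15 (n : ℕ) (hn : 2 ≤ n) (U : Finset (Finset (Fin n)))
    (hUp : ∀ A ∈ U, ∀ B : Finset (Fin n), A ⊆ B → B ∈ U)
    (hcard : U.card ≤ 2 ^ (n - 1))
    (t : ℕ) (ht : (t : ℝ) ≥ (1 + Real.exp (-1)) * n / Real.logb 2 n)
    (A : Fin t → Finset (Fin n)) (hA : ∀ i, A i ∈ U) :
    ∃ i j : Fin t, i < j ∧ (A i ∩ A j).Nonempty := by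
  by_contra hcon
  push_neg at hcon
  simp only [← Finset.not_nonempty_iff_eq_empty] at hcon
  have hempty : (∅ : Finset (Fin n)) ∉ U := by
    intro h0
    have hall : U = Finset.univ :=
      Finset.eq_univ_iff_forall.mpr fun B => hUp ∅ h0 B (Finset.empty_subset B)
    have h1 : (2 : ℕ) ^ n ≤ 2 ^ (n - 1) := by
      calc (2 : ℕ) ^ n = Fintype.card (Finset (Fin n)) := by
            rw [Fintype.card_finset, Fintype.card_fin]
        _ = U.card := by rw [hall, Finset.card_univ]
        _ ≤ 2 ^ (n - 1) := hcard
    have h2 := Nat.pow_lt_pow_right (a := 2) one_lt_two (show n - 1 < n by omega)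
    omega
  have hne : ∀ i, (A i).Nonempty := by
    intro i
    rw [Finset.nonempty_iff_ne_empty]
    intro h
    exact hempty (h ▸ hA i)
  have hdisjU : ((Finset.univ : Finset (Fin t)) : Set (Fin t)).PairwiseDisjoint A := by
    intro i _ j _ hij
    rcases lt_or_gt_of_ne hij with h | h
    · exact Finset.disjoint_iff_inter_eq_empty.mpr
        (Finset.not_nonempty_iff_eq_empty.mp (hcon i j h))
    · exact (Finset.disjoint_iff_inter_eq_empty.mpr
        (Finset.not_nonempty_iff_eq_empty.mp (hcon j i h))).symm
  have hcount0 := aux_count A Finset.univ Finset.univ (fun i _ => Finset.subset_univ _) hdisjU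
  have hkey := key_ineq n t hn ht
  refine stmt_15' n hn U hUp hcard t ht A hA ?_ hkey hcon hne
  convert hcount0 using 3
  congr!
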